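/- Let f be in F(ℓ,2ℓ) such that the unique maximal minor det(X) appears in f with coefficient 1. Then there exists a unique ℓ×ℓ matrix A over F_q such that f = det(X+A) + h, where h is an F_q-linear combination of minors of X of order at most ℓ−2. -/

import Mathlib

open MvPolynomial

/-- The minor of the generic matrix of indeterminates determined by `r` and `c`. -/
noncomputable def genMinor {F : Type*} [Field F] (ℓ ℓ' k : ℕ)
    (r : Fin k → Fin ℓ) (c : Fin k → Fin ℓ') : MvPolynomial (Fin ℓ × Fin ℓ') F :=
  (Matrix.of fun i j => (X (r i, c j) : MvPolynomial (Fin ℓ × Fin ℓ') F)).det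

/-- The generic square matrix of indeterminates, of size `ℓ × ℓ`. -/
noncomputable def genMatrix (F : Type*) [Field F] (ℓ : ℕ) :
    Matrix (Fin ℓ) (Fin ℓ) (MvPolynomial (Fin ℓ × Fin ℓ) F) :=
  Matrix.of fun i j => X (i, j)

namespace GenAux

variable {F : Type*} [Field F]

lemma exists_perm_strictMono {k ℓ : ℕ} {r : Fin k → Fin ℓ} (hr : Function.Injective r) :
    ∃ (σ : Equiv.Perm (Fin k)) (r' : Fin k → Fin ℓ), StrictMono r' ∧ ∀ x, r x = r' (σ x) := by
  classical
  set s : Finset (Fin ℓ) := Finset.univ.image r with hs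
  have hcard : s.card = k := by
    rw [hs, Finset.card_image_of_injective _ hr, Finset.card_univ, Fintype.card_fin]
  set r' : Fin k → Fin ℓ := ⇑(s.orderEmbOfFin hcard) with hr'
  have hmono : StrictMono r' := (s.orderEmbOfFin hcard).strictMono
  have hrange : Set.range r = Set.range r' := by
    rw [hr', Finset.range_orderEmbOfFin, hs, Finset.coe_image, Finset.coe_univ, Set.image_univ]
  refine ⟨(Equiv.ofInjective r hr).trans ((Equiv.setCongr hrange).trans
    (Equiv.ofInjective r' hmono.injective).symm), r', hmono, fun x => ?_⟩
  simp [Equiv.apply_ofInjective_symm]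

lemma genMinor_mem_span {ℓ : ℕ} {S : Set (MvPolynomial (Fin ℓ × Fin ℓ) F)} (k : ℕ)
    (hS : ∀ r c : Fin k → Fin ℓ, StrictMono r → StrictMono c → genMinor ℓ ℓ k r c ∈ S)
    (r c : Fin k → Fin ℓ) :
    genMinor ℓ ℓ k r c ∈ Submodule.span F S := by
  classical
  by_cases hr : Function.Injective r
  · by_cases hc : Function.Injective c
    · obtain ⟨σ, r', hr', hrs⟩ := exists_perm_strictMono hr
      obtain ⟨τ, c', hc', hcs⟩ := exists_perm_strictMono hc
      have hM : (Matrix.of fun i j => (X (r i, c j) : MvPolynomial (Fin ℓ × Fin ℓ) F))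
          = (Matrix.of fun i j => (X (r' i, c' j) : MvPolynomial (Fin ℓ × Fin ℓ) F)).submatrix σ τ := by
        ext i j
        simp [hrs, hcs]
      have hdet : genMinor ℓ ℓ k r c
          = ((Equiv.Perm.sign τ * Equiv.Perm.sign σ : ℤ)) • (genMinor ℓ ℓ k r' c' : MvPolynomial (Fin ℓ × Fin ℓ) F) := by
        have hstep : (Matrix.of fun i j => (X (r' i, c' j) : MvPolynomial (Fin ℓ × Fin ℓ) F)).submatrix ⇑σ ⇑τ
            = (((Matrix.of fun i j => (X (r' i, c' j) : MvPolynomial (Fin ℓ × Fin ℓ) F)).submatrix ⇑σ id).submatrix id ⇑τ) := by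
          ext i j; simp
        rw [genMinor, hM, hstep, Matrix.det_permute', Matrix.det_permute, genMinor, zsmul_eq_mul]
        push_cast
        ring
      rw [hdet]
      exact Submodule.smul_of_tower_mem _ _ (Submodule.subset_span (hS r' c' hr' hc'))
    · obtain ⟨j₁, j₂, hj, hne⟩ : ∃ j₁ j₂, c j₁ = c j₂ ∧ j₁ ≠ j₂ := by
        simpa [Function.Injective, not_forall] using hc
      have : (genMinor ℓ ℓ k r c : MvPolynomial (Fin ℓ × Fin ℓ) F) = 0 :=
        Matrix.det_zero_of_column_eq hne (fun i => by simp [hj])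
      rw [this]; exact Submodule.zero_mem _
  · obtain ⟨i₁, i₂, hi, hne⟩ : ∃ i₁ i₂, r i₁ = r i₂ ∧ i₁ ≠ i₂ := by
      simpa [Function.Injective, not_forall] using hr
    have : (genMinor ℓ ℓ k r c : MvPolynomial (Fin ℓ × Fin ℓ) F) = 0 :=
      Matrix.det_zero_of_row_eq hne (funext fun j => by simp [hi])
    rw [this]; exact Submodule.zero_mem _


section

variable {F : Type*} [Field F]

lemma neg_one_pow_mul_mem {ℓ : ℕ} (W : Submodule F (MvPolynomial (Fin ℓ × Fin ℓ) F)) (e : ℕ)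
    {p : MvPolynomial (Fin ℓ × Fin ℓ) F} (hp : p ∈ W) :
    (-1 : MvPolynomial (Fin ℓ × Fin ℓ) F) ^ e * p ∈ W := by
  have h : (-1 : MvPolynomial (Fin ℓ × Fin ℓ) F) ^ e * p = ((-1 : F) ^ e) • p := by
    rw [smul_eq_C_mul, map_pow, map_neg, map_one]
  rw [h]; exact W.smul_mem _ hp

lemma det_mem_of_unit_rows {ℓ : ℕ} (m : ℕ) (n : ℕ) :
    ∀ (M : Matrix (Fin n) (Fin n) (MvPolynomial (Fin ℓ × Fin ℓ) F)) (s : Finset (Fin n))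
      (a b : Fin n → Fin ℓ) (τ : Fin n → Fin n),
      (∀ p ∈ s, M p = fun q => X (a p, b q)) →
      (∀ p ∉ s, M p = fun q => if q = τ p then 1 else 0) →
      s.card ≤ m →
      M.det ∈ Submodule.span F
        {p : MvPolynomial (Fin ℓ × Fin ℓ) F |
          ∃ k, k ≤ m ∧ ∃ r c : Fin k → Fin ℓ, p = genMinor ℓ ℓ k r c} := by
  induction n with
  | zero =>
      intro M s a b τ h1 h2 hcard
      refine Submodule.subset_span ⟨0, Nat.zero_le m, Fin.elim0, Fin.elim0, ?_⟩
      rw [Matrix.det_fin_zero, genMinor, Matrix.det_fin_zero]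
  | succ n ih =>
      intro M s a b τ h1 h2 hcard
      classical
      by_cases hs : s = Finset.univ
      · subst hs
        have hM : M = Matrix.of fun p q => X (a p, b q) := by
          funext p
          rw [h1 p (Finset.mem_univ p)]
          rfl
        refine Submodule.subset_span ⟨n + 1, ?_, a, b, ?_⟩
        · simpa [Finset.card_univ] using hcard
        · rw [hM]; rfl
      · obtain ⟨p₀, hp₀⟩ : ∃ p₀, p₀ ∉ s := by
          by_contra h
          push_neg at h
          exact hs (Finset.eq_univ_iff_forall.2 h)
        by_cases hdup : ∃ p₁, p₁ ∉ s ∧ p₁ ≠ p₀ ∧ τ p₁ = τ p₀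
        · obtain ⟨p₁, hp₁, hne, hττ⟩ := hdup
          have hz : M.det = 0 :=
            Matrix.det_zero_of_row_eq hne (by rw [h2 p₁ hp₁, h2 p₀ hp₀, hττ])
          rw [hz]; exact Submodule.zero_mem _
        · push_neg at hdup
          have hrow : M p₀ = fun q => if q = τ p₀ then 1 else 0 := h2 p₀ hp₀
          have hcollapse : M.det = (-1) ^ ((p₀ : ℕ) + ((τ p₀ : Fin (n+1)) : ℕ)) *
              (M.submatrix p₀.succAbove (τ p₀).succAbove).det := by
            rw [Matrix.det_succ_row M p₀, Finset.sum_eq_single (τ p₀)]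
            · rw [hrow]; simp
            · intro q _ hq
              rw [hrow]; simp [hq]
            · intro h; exact absurd (Finset.mem_univ _) h
          set s' : Finset (Fin n) := Finset.univ.filter (fun p => p₀.succAbove p ∈ s) with hs'
          have hτne : ∀ p : Fin n, p₀.succAbove p ∉ s → τ (p₀.succAbove p) ≠ τ p₀ :=
            fun p hp => hdup _ hp (Fin.succAbove_ne p₀ p)
          have hτ'ex : ∀ p : Fin n, p₀.succAbove p ∉ s →
              ∃ z : Fin n, (τ p₀).succAbove z = τ (p₀.succAbove p) :=
            fun p hp => Fin.exists_succAbove_eq (hτne p hp)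
          set τ' : Fin n → Fin n := fun p =>
            if h : p₀.succAbove p ∈ s then p
            else Classical.choose (hτ'ex p h) with hτ'
          have hτ'spec : ∀ (p : Fin n) (h : p₀.succAbove p ∉ s),
              (τ p₀).succAbove (τ' p) = τ (p₀.succAbove p) := by
            intro p h
            rw [hτ']
            simp only [dif_neg h]
            exact Classical.choose_spec (hτ'ex p h)
          have h1' : ∀ p ∈ s', (M.submatrix p₀.succAbove (τ p₀).succAbove) p
              = fun q => X ((a ∘ p₀.succAbove) p, (b ∘ (τ p₀).succAbove) q) := by
            intro p hp
            have hmem : p₀.succAbove p ∈ s := (Finset.mem_filter.1 hp).2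
            funext q
            simp [Matrix.submatrix_apply, h1 _ hmem]
          have h2' : ∀ p ∉ s', (M.submatrix p₀.succAbove (τ p₀).succAbove) p
              = fun q => if q = τ' p then 1 else 0 := by
            intro p hp
            have hns : p₀.succAbove p ∉ s := fun h =>
              hp (Finset.mem_filter.2 ⟨Finset.mem_univ _, h⟩)
            funext q
            rw [Matrix.submatrix_apply, h2 _ hns]
            by_cases hq : q = τ' p
            · subst hq
              simp [hτ'spec p hns]
            · have hne2 : (τ p₀).succAbove q ≠ τ (p₀.succAbove p) := by
                rw [← hτ'spec p hns]
                exact fun hc => hq (Fin.succAbove_right_injective hc)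
              simp [hq, hne2]
          have hcard' : s'.card ≤ m := by
            have himg : s'.image p₀.succAbove = s := by
              ext x
              simp only [Finset.mem_image, hs', Finset.mem_filter, Finset.mem_univ, true_and]
              constructor
              · rintro ⟨p, hp, rfl⟩; exact hp
              · intro hx
                obtain ⟨p, hp⟩ := Fin.exists_succAbove_eq
                  (show x ≠ p₀ from fun h => hp₀ (h ▸ hx))
                exact ⟨p, by rw [hp]; exact hx, hp⟩
            calc s'.card = (s'.image p₀.succAbove).card :=
                  (Finset.card_image_of_injective _ Fin.succAbove_right_injective).symm
              _ = s.card := by rw [himg]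
              _ ≤ m := hcard
          rw [hcollapse]
          exact neg_one_pow_mul_mem _ _
            (ih _ s' (a ∘ p₀.succAbove) (b ∘ (τ p₀).succAbove) τ' h1' h2' hcard')

end

lemma det_updateRow_linear {n' : Type*} [DecidableEq n'] [Fintype n'] {R : Type*} [CommRing R]
    (M : Matrix n' n' R) (i : n') {α : Type*} (t : Finset α) (c : α → R) (u : α → n' → R) :
    (M.updateRow i (∑ j ∈ t, c j • u j)).det = ∑ j ∈ t, c j * (M.updateRow i (u j)).det := by
  classical
  induction t using Finset.induction_on with
  | empty =>
      simp only [Finset.sum_empty]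
      exact Matrix.det_eq_zero_of_row_eq_zero i (fun j => by simp)
  | insert _ _ hj ih =>
      rw [Finset.sum_insert hj, Matrix.det_updateRow_add, Matrix.det_updateRow_smul,
        Finset.sum_insert hj, ih]

lemma det_mem_of_const_rows {ℓ : ℕ} (m : ℕ) (t : Finset (Fin ℓ)) :
    ∀ (M : Matrix (Fin ℓ) (Fin ℓ) (MvPolynomial (Fin ℓ × Fin ℓ) F)) (s : Finset (Fin ℓ))
      (a : Fin ℓ → Fin ℓ) (τ : Fin ℓ → Fin ℓ) (v : Fin ℓ → Fin ℓ → F),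
      (∀ p ∈ s, M p = fun q => X (a p, q)) →
      (∀ p, p ∉ s → p ∉ t → M p = fun q => if q = τ p then 1 else 0) →
      (∀ p ∈ t, M p = fun q => C (v p q)) →
      (∀ p ∈ t, p ∉ s) →
      s.card ≤ m →
      M.det ∈ Submodule.span F
        {p : MvPolynomial (Fin ℓ × Fin ℓ) F |
          ∃ k, k ≤ m ∧ ∃ r c : Fin k → Fin ℓ, p = genMinor ℓ ℓ k r c} := by
  classical
  induction t using Finset.induction_on with
  | empty =>
      intro M s a τ v h1 h2 h3 hdisj hcard
      exact det_mem_of_unit_rows m ℓ M s a id τ h1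
        (fun p hp => h2 p hp (Finset.notMem_empty p)) hcard
  | @insert p₀ t hp₀t ih =>
      intro M s a τ v h1 h2 h3 hdisj hcard
      have hp₀s : p₀ ∉ s := hdisj p₀ (Finset.mem_insert_self _ _)
      have hrow : M p₀ = ∑ j : Fin ℓ, (C (v p₀ j) : MvPolynomial (Fin ℓ × Fin ℓ) F) •
          (fun q => if q = j then (1 : MvPolynomial (Fin ℓ × Fin ℓ) F) else 0) := by
        rw [h3 p₀ (Finset.mem_insert_self _ _)]
        funext q
        simp only [Finset.sum_apply, Pi.smul_apply, smul_eq_mul, mul_ite, mul_one, mul_zero]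
        rw [Finset.sum_ite_eq]
        simp
      have hMdet : M.det = (M.updateRow p₀ (M p₀)).det := by rw [Matrix.updateRow_eq_self]
      rw [hMdet, hrow, det_updateRow_linear]
      refine Submodule.sum_mem _ fun j _ => ?_
      rw [← smul_eq_C_mul]
      refine Submodule.smul_mem _ _ ?_
      refine ih (M.updateRow p₀ (fun q => if q = j then 1 else 0)) s a
        (Function.update τ p₀ j) v ?_ ?_ ?_ ?_ hcard
      · intro p hp
        rw [Matrix.updateRow_ne (fun h => hp₀s (by rw [← h]; exact hp)), h1 p hp]
      · intro p hps hpt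
        by_cases hpp : p = p₀
        · subst hpp
          rw [Matrix.updateRow_self]
          funext q
          simp [Function.update_self]
        · rw [Matrix.updateRow_ne hpp,
            h2 p hps (fun h => (Finset.mem_insert.1 h).elim hpp hpt),
            Function.update_of_ne hpp]
      · intro p hpt
        have hpp : p ≠ p₀ := fun h => hp₀t (h ▸ hpt)
        rw [Matrix.updateRow_ne hpp, h3 p (Finset.mem_insert_of_mem hpt)]
      · intro p hpt
        exact hdisj p (Finset.mem_insert_of_mem hpt)


lemma det_add_expansion {ℓ : ℕ} (A : Matrix (Fin ℓ) (Fin ℓ) F) :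
    (genMatrix F ℓ + A.map C).det
      = ∑ s : Finset (Fin ℓ),
          (Matrix.of (s.piecewise (genMatrix F ℓ) (fun i q => C (A i q)))).det := by
  classical
  have h := (Matrix.detRowAlternating (R := MvPolynomial (Fin ℓ × Fin ℓ) F)
      (n := Fin ℓ)).toMultilinearMap.map_add_univ
      (fun i => genMatrix F ℓ i) (fun i q => (C (A i q) : MvPolynomial (Fin ℓ × Fin ℓ) F))
  exact h


noncomputable def Kdet (F : Type*) [Field F] (n : ℕ) (i j : Fin (n+1)) :
    MvPolynomial (Fin (n+1) × Fin (n+1)) F :=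
  ((genMatrix F (n+1)).updateRow i (Pi.single j 1)).det

lemma Kdet_eq (n : ℕ) (i j : Fin (n+1)) :
    Kdet F n i j = ((-1 : F) ^ ((i : ℕ) + (j : ℕ))) •
      genMinor (n+1) (n+1) n (Fin.succAbove i) (Fin.succAbove j) := by
  classical
  rw [Kdet, Matrix.det_succ_row _ i, Finset.sum_eq_single j]
  · rw [Matrix.updateRow_self, Matrix.submatrix_updateRow_succAbove]
    rw [Pi.single_eq_same, mul_one]
    rw [smul_eq_C_mul, map_pow, map_neg, map_one]
    rfl
  · intro q _ hq
    rw [Matrix.updateRow_self, Pi.single_eq_of_ne hq]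
    ring
  · intro h; exact absurd (Finset.mem_univ _) h

lemma main_expansion (n : ℕ) (A : Matrix (Fin (n+1)) (Fin (n+1)) F) :
    (genMatrix F (n+1) + A.map C).det - (genMatrix F (n+1)).det
      - ∑ i, ∑ j, A i j • Kdet F n i j
      ∈ Submodule.span F {p : MvPolynomial (Fin (n+1) × Fin (n+1)) F |
          ∃ k, k + 2 ≤ n + 1 ∧ ∃ r c : Fin k → Fin (n+1), p = genMinor (n+1) (n+1) k r c} := by
  classical
  set D : Finset (Fin (n+1)) → MvPolynomial (Fin (n+1) × Fin (n+1)) F := fun s =>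
    (Matrix.of (s.piecewise (genMatrix F (n+1)) (fun i q => C (A i q)))).det with hD
  have hrow_mem : ∀ (s : Finset (Fin (n+1))) (p : Fin (n+1)), p ∈ s →
      Matrix.of (s.piecewise (genMatrix F (n+1)) (fun i q => C (A i q))) p
        = genMatrix F (n+1) p :=
    fun s p hp => Finset.piecewise_eq_of_mem s (genMatrix F (n+1)) (fun i q => C (A i q)) hp
  have hrow_not_mem : ∀ (s : Finset (Fin (n+1))) (p : Fin (n+1)), p ∉ s →
      Matrix.of (s.piecewise (genMatrix F (n+1)) (fun i q => C (A i q))) p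
        = fun q => C (A p q) :=
    fun s p hp => Finset.piecewise_eq_of_notMem s (genMatrix F (n+1)) (fun i q => C (A i q)) hp
  have hsum : (genMatrix F (n+1) + A.map C).det = ∑ s : Finset (Fin (n+1)), D s :=
    det_add_expansion A
  have hDuniv : D Finset.univ = (genMatrix F (n+1)).det := by
    simp only [hD, Finset.piecewise_univ]
    congr 1; ext p q : 1; exact congrFun (hrow_mem _ p (Finset.mem_univ p)) q
  have hDerase : ∀ i : Fin (n+1), D (Finset.univ.erase i) = ∑ j, A i j • Kdet F n i j := by
    intro i
    have hM : Matrix.of ((Finset.univ.erase i).piecewise (genMatrix F (n+1))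
          (fun p q => C (A p q)))
        = (genMatrix F (n+1)).updateRow i (∑ j : Fin (n+1),
            (C (A i j) : MvPolynomial (Fin (n+1) × Fin (n+1)) F) •
            (fun q => if q = j then (1 : MvPolynomial (Fin (n+1) × Fin (n+1)) F) else 0)) := by
      funext p
      by_cases hp : p = i
      · subst hp
        rw [hrow_not_mem _ p (Finset.notMem_erase p _), Matrix.updateRow_self]
        funext q
        simp only [Finset.sum_apply, Pi.smul_apply, smul_eq_mul, mul_ite, mul_one, mul_zero]
        rw [Finset.sum_ite_eq]
        simp
      · rw [hrow_mem _ p (Finset.mem_erase.2 ⟨hp, Finset.mem_univ _⟩), Matrix.updateRow_ne hp]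
    simp only [hD]
    rw [hM, det_updateRow_linear]
    refine Finset.sum_congr rfl fun j _ => ?_
    rw [← smul_eq_C_mul, Kdet]
    have hu : (fun q => if q = j then (1 : MvPolynomial (Fin (n+1) × Fin (n+1)) F) else 0)
        = Pi.single j 1 := by
      funext q
      rw [Pi.single_apply]
    rw [hu]
  have hmem : ∀ s ∈ Finset.univ.filter
      (fun s : Finset (Fin (n+1)) => s.card + 2 ≤ n+1), D s ∈
      Submodule.span F {p : MvPolynomial (Fin (n+1) × Fin (n+1)) F |
          ∃ k, k + 2 ≤ n + 1 ∧ ∃ r c : Fin k → Fin (n+1), p = genMinor (n+1) (n+1) k r c} := by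
    intro s hs
    have hcard : s.card + 2 ≤ n + 1 := (Finset.mem_filter.1 hs).2
    refine Submodule.span_mono ?_ (det_mem_of_const_rows s.card sᶜ _ s id id (fun p q => A p q)
      ?_ ?_ ?_ ?_ le_rfl)
    · rintro p ⟨k, hk, r, c, rfl⟩
      exact ⟨k, by omega, r, c, rfl⟩
    · intro p hp
      rw [hrow_mem s p hp]
      rfl
    · intro p hps hpc
      exact absurd (Finset.mem_compl.2 hps) hpc
    · intro p hp
      exact hrow_not_mem s p (Finset.mem_compl.1 hp)
    · intro p hp
      exact Finset.mem_compl.1 hp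
  have hpart : ∑ s : Finset (Fin (n+1)), D s
      = (∑ s ∈ Finset.univ.filter (fun s : Finset (Fin (n+1)) => s.card + 2 ≤ n+1), D s)
        + ((∑ i, D (Finset.univ.erase i)) + D Finset.univ) := by
    rw [← Finset.sum_filter_add_sum_filter_not Finset.univ
      (fun s : Finset (Fin (n+1)) => s.card + 2 ≤ n+1) D]
    congr 1
    have hT : Finset.univ.filter (fun s : Finset (Fin (n+1)) => ¬(s.card + 2 ≤ n+1))
        = insert Finset.univ ((Finset.univ : Finset (Fin (n+1))).image
            (fun i => Finset.univ.erase i)) := by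
      ext s
      simp only [Finset.mem_filter, Finset.mem_univ, true_and, Finset.mem_insert,
        Finset.mem_image, not_le]
      constructor
      · intro hcard
        have hle : s.card ≤ n + 1 := by
          simpa using Finset.card_le_card (Finset.subset_univ s)
        rcases Nat.lt_or_ge s.card (n+1) with h | h
        · right
          have hc : s.card = n := by omega
          have hcompl : sᶜ.card = 1 := by
            rw [Finset.card_compl, hc]
            simp
          obtain ⟨i, hi⟩ := Finset.card_eq_one.1 hcompl
          have h2 := congrArg (·ᶜ) hi
          simp only [compl_compl] at h2
          exact ⟨i, by rw [h2, Finset.compl_singleton]⟩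
        · left
          have hc : s.card = n + 1 := by omega
          exact Finset.eq_univ_of_card s (by simp [hc])
      · rintro (rfl | ⟨i, _, rfl⟩)
        · simp [Finset.card_univ]
        · rw [Finset.card_erase_of_mem (Finset.mem_univ i), Finset.card_univ]
          simp
    have hnotmem : (Finset.univ : Finset (Fin (n+1))) ∉
        (Finset.univ : Finset (Fin (n+1))).image (fun i => Finset.univ.erase i) := by
      intro hc
      obtain ⟨i, _, hi⟩ := Finset.mem_image.1 hc
      have hmm : i ∈ (Finset.univ : Finset (Fin (n+1))) := Finset.mem_univ i
      rw [← hi] at hmm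
      exact (Finset.notMem_erase i _) hmm
    have hinj : ∀ i ∈ (Finset.univ : Finset (Fin (n+1))), ∀ i' ∈ (Finset.univ : Finset (Fin (n+1))),
        Finset.univ.erase i = Finset.univ.erase i' → i = i' := by
      intro i _ i' _ h
      by_contra hne
      have hmm : i ∈ Finset.univ.erase i' := Finset.mem_erase.2 ⟨hne, Finset.mem_univ _⟩
      rw [← h] at hmm
      exact (Finset.notMem_erase i _) hmm
    rw [hT, Finset.sum_insert hnotmem, Finset.sum_image hinj]
    exact add_comm _ _
  have hder : ∑ i, D (Finset.univ.erase i) = ∑ i, ∑ j, A i j • Kdet F n i j :=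
    Finset.sum_congr rfl fun i _ => hDerase i
  have hfinal : (genMatrix F (n+1) + A.map C).det - (genMatrix F (n+1)).det
      - ∑ i, ∑ j, A i j • Kdet F n i j
      = ∑ s ∈ Finset.univ.filter (fun s : Finset (Fin (n+1)) => s.card + 2 ≤ n+1), D s := by
    rw [hsum, hpart, hDuniv, hder]
    abel
  rw [hfinal]
  exact Submodule.sum_mem _ hmem


lemma prod_X_monomial {σ' : Type*} {α : Type*} (s : Finset α) (p : α → σ') :
    ∏ t ∈ s, (X (p t) : MvPolynomial σ' F) = monomial (∑ t ∈ s, Finsupp.single (p t) 1) 1 := by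
  classical
  induction s using Finset.induction_on with
  | empty => simp
  | insert _ _ hj ih =>
      rw [Finset.prod_insert hj, Finset.sum_insert hj, ih, X, monomial_mul, mul_one]

lemma totalDegree_genMinor_le (ℓ ℓ' k : ℕ) (r : Fin k → Fin ℓ) (c : Fin k → Fin ℓ') :
    (genMinor (F := F) ℓ ℓ' k r c).totalDegree ≤ k := by
  rw [genMinor, Matrix.det_apply]
  refine (totalDegree_finset_sum _ _).trans (Finset.sup_le fun σ _ => ?_)
  have h1 : (Equiv.Perm.sign σ • ∏ i, (Matrix.of fun i j =>
        (X (r i, c j) : MvPolynomial (Fin ℓ × Fin ℓ') F)) (σ i) i).totalDegree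
      ≤ (∏ i, (Matrix.of fun i j =>
        (X (r i, c j) : MvPolynomial (Fin ℓ × Fin ℓ') F)) (σ i) i).totalDegree := by
    rw [Units.smul_def]
    exact totalDegree_smul_le _ _
  refine h1.trans ((totalDegree_finset_prod _ _).trans ?_)
  have h2 : ∀ i : Fin k, ((Matrix.of fun i j =>
      (X (r i, c j) : MvPolynomial (Fin ℓ × Fin ℓ') F)) (σ i) i).totalDegree ≤ 1 :=
    fun i => le_of_eq (totalDegree_X _)
  calc ∑ i, ((Matrix.of fun i j => (X (r i, c j) : MvPolynomial (Fin ℓ × Fin ℓ') F)) (σ i) i).totalDegree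
      ≤ ∑ _i : Fin k, 1 := Finset.sum_le_sum (fun i _ => h2 i)
    _ = k := by simp

lemma mass_sum_single {σ' : Type*} {α : Type*} (s : Finset α) (p : α → σ') :
    (∑ x ∈ (∑ t ∈ s, Finsupp.single (p t) (1:ℕ)).support, (∑ t ∈ s, Finsupp.single (p t) (1:ℕ)) x)
      = s.card := by
  classical
  have h : (∑ x ∈ (∑ t ∈ s, Finsupp.single (p t) (1:ℕ)).support,
      (∑ t ∈ s, Finsupp.single (p t) (1:ℕ)) x)
      = (∑ t ∈ s, Finsupp.single (p t) (1:ℕ)).sum (fun _ e => e) := rfl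
  rw [h, ← Finsupp.sum_finsetSum_index (fun _ => rfl) (fun _ _ _ => rfl)]
  simp [Finsupp.sum_single_index]

noncomputable def diagMono (n : ℕ) (i j : Fin (n+1)) : (Fin (n+1) × Fin (n+1)) →₀ ℕ :=
  ∑ t : Fin n, Finsupp.single (Fin.succAbove i t, Fin.succAbove j t) 1

lemma diag_eq_imp (n : ℕ) (i j i' j' : Fin (n+1)) (π : Equiv.Perm (Fin n))
    (h : (∑ t : Fin n, Finsupp.single (Fin.succAbove i' (π t), Fin.succAbove j' t) (1:ℕ))
        = diagMono n i j) :
    i' = i ∧ j' = j ∧ π = 1 := by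
  classical
  have hval : ∀ (u : Fin n → Fin (n+1) × Fin (n+1)) (x : Fin (n+1) × Fin (n+1)),
      (∑ t : Fin n, Finsupp.single (u t) (1:ℕ)) x
        = ∑ t : Fin n, (if u t = x then 1 else 0) := by
    intro u x
    rw [Finset.sum_apply']
    exact Finset.sum_congr rfl fun t _ => Finsupp.single_apply
  have hexists : ∀ t₀ : Fin n, ∃ t, (Fin.succAbove i' (π t), Fin.succAbove j' t)
      = (Fin.succAbove i t₀, Fin.succAbove j t₀) := by
    intro t₀
    by_contra hc
    push_neg at hc
    have h1 : (∑ t : Fin n, Finsupp.single (Fin.succAbove i' (π t), Fin.succAbove j' t) (1:ℕ))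
        (Fin.succAbove i t₀, Fin.succAbove j t₀) = 0 := by
      rw [hval]
      exact Finset.sum_eq_zero fun t _ => if_neg (hc t)
    have h2 : (diagMono n i j) (Fin.succAbove i t₀, Fin.succAbove j t₀) ≠ 0 := by
      rw [diagMono, hval]
      intro hz
      have := (Finset.sum_eq_zero_iff.1 hz) t₀ (Finset.mem_univ t₀)
      rw [if_pos rfl] at this
      exact one_ne_zero this
    rw [h] at h1
    exact h2 h1
  have hii : i' = i := by
    by_contra hne
    obtain ⟨t₀, ht₀⟩ := Fin.exists_succAbove_eq (show i' ≠ i from hne)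
    obtain ⟨t, ht⟩ := hexists t₀
    have hP := (Prod.ext_iff.1 ht).1
    rw [ht₀] at hP
    exact Fin.succAbove_ne i' (π t) hP
  have hjj : j' = j := by
    by_contra hne
    obtain ⟨t₀, ht₀⟩ := Fin.exists_succAbove_eq (show j' ≠ j from hne)
    obtain ⟨t, ht⟩ := hexists t₀
    have hP := (Prod.ext_iff.1 ht).2
    rw [ht₀] at hP
    exact Fin.succAbove_ne j' t hP
  subst hii; subst hjj
  refine ⟨rfl, rfl, ?_⟩
  ext t₀ : 1
  obtain ⟨t, ht⟩ := hexists t₀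
  have hP := Prod.ext_iff.1 ht
  have htt : t = t₀ := Fin.succAbove_right_injective hP.2
  rw [htt] at hP
  have := Fin.succAbove_right_injective hP.1
  simpa using this

lemma coeff_genMinor_diag (n : ℕ) (i j i' j' : Fin (n+1)) :
    coeff (diagMono n i j)
      (genMinor (F := F) (n+1) (n+1) n (Fin.succAbove i') (Fin.succAbove j'))
      = if i' = i ∧ j' = j then 1 else 0 := by
  classical
  rw [genMinor, Matrix.det_apply]
  have hterm : ∀ σ : Equiv.Perm (Fin n),
      (Equiv.Perm.sign σ • ∏ t, (Matrix.of fun s t =>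
          (X (Fin.succAbove i' s, Fin.succAbove j' t) : MvPolynomial (Fin (n+1) × Fin (n+1)) F)) (σ t) t)
      = ((Equiv.Perm.sign σ : ℤ)) •
          (monomial (∑ t : Fin n, Finsupp.single (Fin.succAbove i' (σ t), Fin.succAbove j' t) 1)
            (1 : F)) := by
    intro σ
    rw [Units.smul_def]
    congr 1
    exact prod_X_monomial Finset.univ (fun t => (Fin.succAbove i' (σ t), Fin.succAbove j' t))
  rw [coeff_sum]
  by_cases hij : i' = i ∧ j' = j
  · obtain ⟨rfl, rfl⟩ := hij
    rw [Finset.sum_eq_single 1]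
    · rw [hterm, coeff_smul, coeff_monomial]
      have hone : (∑ t : Fin n, Finsupp.single (Fin.succAbove i' ((1 : Equiv.Perm (Fin n)) t),
          Fin.succAbove j' t) (1:ℕ)) = diagMono n i' j' := by
        rw [diagMono]
        rfl
      rw [if_pos hone]
      simp
    · intro σ _ hσ
      rw [hterm, coeff_smul, coeff_monomial, if_neg, smul_zero]
      intro hc
      exact hσ (diag_eq_imp n i' j' i' j' σ hc).2.2
    · intro hc
      exact absurd (Finset.mem_univ _) hc
  · rw [if_neg hij]
    refine Finset.sum_eq_zero fun σ _ => ?_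
    rw [hterm, coeff_smul, coeff_monomial, if_neg, smul_zero]
    intro hc
    obtain ⟨h1, h2, _⟩ := diag_eq_imp n i j i' j' σ hc
    exact hij ⟨h1, h2⟩

lemma coeff_Kdet_diag (n : ℕ) (i j i' j' : Fin (n+1)) :
    coeff (diagMono n i j) (Kdet F n i' j')
      = if i' = i ∧ j' = j then (-1 : F) ^ ((i : ℕ) + (j : ℕ)) else 0 := by
  rw [Kdet_eq, coeff_smul, coeff_genMinor_diag]
  by_cases hij : i' = i ∧ j' = j
  · obtain ⟨rfl, rfl⟩ := hij
    simp
  · simp [hij]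

lemma coeff_diag_eq_zero (n : ℕ) (i j : Fin (n+1))
    {w : MvPolynomial (Fin (n+1) × Fin (n+1)) F}
    (hw : w ∈ Submodule.span F {p : MvPolynomial (Fin (n+1) × Fin (n+1)) F |
        ∃ k, k + 2 ≤ n + 1 ∧ ∃ r c : Fin k → Fin (n+1), p = genMinor (n+1) (n+1) k r c}) :
    coeff (diagMono n i j) w = 0 := by
  classical
  let φ : MvPolynomial (Fin (n+1) × Fin (n+1)) F →ₗ[F] F :=
    { toFun := coeff (diagMono n i j)
      map_add' := fun p q => coeff_add _ p q
      map_smul' := fun r p => coeff_smul _ r p }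
  have hle : Submodule.span F {p : MvPolynomial (Fin (n+1) × Fin (n+1)) F |
      ∃ k, k + 2 ≤ n + 1 ∧ ∃ r c : Fin k → Fin (n+1), p = genMinor (n+1) (n+1) k r c}
      ≤ LinearMap.ker φ := by
    rw [Submodule.span_le]
    rintro p ⟨k, hk, r, c, rfl⟩
    simp only [SetLike.mem_coe, LinearMap.mem_ker]
    show coeff (diagMono n i j) (genMinor (n+1) (n+1) k r c) = 0
    apply coeff_eq_zero_of_totalDegree_lt
    have hmass : ∑ x ∈ (diagMono n i j).support, (diagMono n i j) x = n := by
      rw [diagMono]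
      rw [mass_sum_single Finset.univ (fun t => (Fin.succAbove i t, Fin.succAbove j t))]
      simp
    rw [hmass]
    exact lt_of_le_of_lt (totalDegree_genMinor_le _ _ _ _ _) (by omega)
  exact hle hw

lemma strictMono_fin_eq_succAbove {n : ℕ} {r : Fin n → Fin (n+1)} (hr : StrictMono r) :
    ∃ i : Fin (n+1), r = Fin.succAbove i := by
  classical
  set s := Finset.univ.image r with hs
  have hcard : s.card = n := by
    rw [hs, Finset.card_image_of_injective _ hr.injective]
    simp
  have hcompl : sᶜ.card = 1 := by
    rw [Finset.card_compl, hcard]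
    simp
  obtain ⟨i, hi⟩ := Finset.card_eq_one.1 hcompl
  have hrs : ∀ x, r x ∈ s := fun x => Finset.mem_image_of_mem r (Finset.mem_univ x)
  have hsucc : ∀ x, Fin.succAbove i x ∈ s := by
    intro x
    by_contra hc
    have hmm : Fin.succAbove i x ∈ sᶜ := Finset.mem_compl.2 hc
    rw [hi, Finset.mem_singleton] at hmm
    exact Fin.succAbove_ne i x hmm
  have h1 := Finset.orderEmbOfFin_unique hcard hrs hr
  have h2 := Finset.orderEmbOfFin_unique hcard hsucc (Fin.strictMono_succAbove i)
  exact ⟨i, h1.trans h2.symm⟩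

end GenAux



/-- If `f ∈ F(ℓ,2ℓ)` contains the maximal minor `det(X)` with coefficient `1`
(i.e. `f = det(X) + g` with `g` a combination of minors of order `< ℓ`), then there
is a unique `ℓ × ℓ` matrix `A` over `F_q` with `f = det(X+A) + h`, where `h` is an
`F_q`-linear combination of minors of `X` of order at most `ℓ - 2`. -/
theorem exists_unique_translate (F : Type*) [Field F] [Fintype F] (ℓ : ℕ) (hℓ : 1 ≤ ℓ)
    (f : MvPolynomial (Fin ℓ × Fin ℓ) F)
    (hf : ∃ g ∈ Submodule.span F
        {p : MvPolynomial (Fin ℓ × Fin ℓ) F |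
          ∃ (k : ℕ) (_ : k < ℓ) (r c : Fin k → Fin ℓ),
            StrictMono r ∧ StrictMono c ∧ p = genMinor ℓ ℓ k r c},
      f = (genMatrix F ℓ).det + g) :
    ∃! A : Matrix (Fin ℓ) (Fin ℓ) F,
      ∃ h ∈ Submodule.span F
        {p : MvPolynomial (Fin ℓ × Fin ℓ) F |
          ∃ (k : ℕ) (_ : k + 2 ≤ ℓ) (r c : Fin k → Fin ℓ),
            StrictMono r ∧ StrictMono c ∧ p = genMinor ℓ ℓ k r c},
        f = (genMatrix F ℓ + A.map C).det + h := by
  classical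
  obtain ⟨n, rfl⟩ : ∃ n, ℓ = n + 1 := ⟨ℓ - 1, (Nat.succ_pred_eq_of_pos hℓ).symm⟩
  obtain ⟨g, hg, hfg⟩ := hf
  set W : Submodule F (MvPolynomial (Fin (n+1) × Fin (n+1)) F) := Submodule.span F
    {p : MvPolynomial (Fin (n+1) × Fin (n+1)) F |
      ∃ (k : ℕ) (_ : k + 2 ≤ n+1) (r c : Fin k → Fin (n+1)),
        StrictMono r ∧ StrictMono c ∧ p = genMinor (n+1) (n+1) k r c} with hWdef
  -- the arbitrary (non-monotone) low span is contained in W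
  have harb : Submodule.span F {p : MvPolynomial (Fin (n+1) × Fin (n+1)) F |
      ∃ k, k + 2 ≤ n + 1 ∧ ∃ r c : Fin k → Fin (n+1), p = genMinor (n+1) (n+1) k r c} ≤ W := by
    rw [hWdef, Submodule.span_le]
    rintro p ⟨k, hk, r, c, rfl⟩
    exact SetLike.mem_coe.2 (GenAux.genMinor_mem_span
      (S := {p : MvPolynomial (Fin (n+1) × Fin (n+1)) F |
        ∃ (k : ℕ) (_ : k + 2 ≤ n+1) (r c : Fin k → Fin (n+1)),
          StrictMono r ∧ StrictMono c ∧ p = genMinor (n+1) (n+1) k r c})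
      k (fun r' c' hr hc => ⟨k, hk, r', c', hr, hc, rfl⟩) r c)
  have hWcoeff : ∀ (i j : Fin (n+1)) (w : MvPolynomial (Fin (n+1) × Fin (n+1)) F), w ∈ W →
      coeff (GenAux.diagMono n i j) w = 0 := by
    intro i j w hw
    refine GenAux.coeff_diag_eq_zero n i j (Submodule.span_mono ?_ hw)
    rintro p ⟨k, hk, r, c, _, _, rfl⟩
    exact ⟨k, hk, r, c, rfl⟩
  -- the linear map A ↦ ∑ A i j • Kdet
  set L : Matrix (Fin (n+1)) (Fin (n+1)) F →ₗ[F] MvPolynomial (Fin (n+1) × Fin (n+1)) F :=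
    { toFun := fun B => ∑ i, ∑ j, B i j • GenAux.Kdet F n i j
      map_add' := by
        intro B B'
        simp [Matrix.add_apply, add_smul, Finset.sum_add_distrib]
      map_smul' := by
        intro r B
        simp [Matrix.smul_apply, Finset.smul_sum, smul_smul] } with hLdef
  have hLapp : ∀ B : Matrix (Fin (n+1)) (Fin (n+1)) F,
      L B = ∑ i, ∑ j, B i j • GenAux.Kdet F n i j := fun B => rfl
  -- order-n strict minors are in the range of L
  have hrange : Submodule.span F {p : MvPolynomial (Fin (n+1) × Fin (n+1)) F |
      ∃ r c : Fin n → Fin (n+1), StrictMono r ∧ StrictMono c ∧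
        p = genMinor (n+1) (n+1) n r c} ≤ LinearMap.range L := by
    rw [Submodule.span_le]
    rintro p ⟨r, c, hr, hc, rfl⟩
    obtain ⟨i, rfl⟩ := GenAux.strictMono_fin_eq_succAbove hr
    obtain ⟨j, rfl⟩ := GenAux.strictMono_fin_eq_succAbove hc
    set B : Matrix (Fin (n+1)) (Fin (n+1)) F :=
      fun p q => if p = i ∧ q = j then (-1 : F) ^ ((i : ℕ) + (j : ℕ)) else 0 with hB
    refine ⟨B, ?_⟩
    have hLB : L B = ((-1 : F) ^ ((i : ℕ) + (j : ℕ))) • GenAux.Kdet F n i j := by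
      rw [hLapp, Finset.sum_eq_single i]
      · rw [Finset.sum_eq_single j]
        · simp [hB]
        · intro q _ hq
          simp [hB, hq]
        · intro hc'; exact absurd (Finset.mem_univ _) hc'
      · intro p _ hp
        refine Finset.sum_eq_zero fun q _ => ?_
        simp [hB, hp]
      · intro hc'; exact absurd (Finset.mem_univ _) hc'
    rw [hLB, GenAux.Kdet_eq, smul_smul, ← pow_add]
    rw [Even.neg_one_pow ⟨(i : ℕ) + (j : ℕ), by ring⟩, one_smul]
  -- split g
  have hsplit : g ∈ LinearMap.range L ⊔ W := by
    refine Submodule.span_le.2 ?_ hg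
    rintro p ⟨k, hk, r, c, hr, hc, rfl⟩
    rcases Nat.lt_or_ge k n with hkn | hkn
    · exact Submodule.mem_sup_right
        (Submodule.subset_span ⟨k, by omega, r, c, hr, hc, rfl⟩)
    · have hkeq : k = n := by omega
      subst hkeq
      exact Submodule.mem_sup_left
        (hrange (Submodule.subset_span ⟨r, c, hr, hc, rfl⟩))
  obtain ⟨p₁, hp₁, w, hw, hgeq⟩ := Submodule.mem_sup.1 hsplit
  obtain ⟨A₀, rfl⟩ := hp₁
  have hmA : (genMatrix F (n+1) + A₀.map C).det - (genMatrix F (n+1)).det - L A₀ ∈ W := by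
    rw [hLapp]
    exact harb (GenAux.main_expansion n A₀)
  set hdefect := (genMatrix F (n+1) + A₀.map C).det - (genMatrix F (n+1)).det - L A₀ with hdd
  have hfeq : f = (genMatrix F (n+1) + A₀.map C).det + (w - hdefect) := by
    rw [hfg, ← hgeq, hdd]
    ring
  refine ⟨A₀, ⟨w - hdefect, Submodule.sub_mem W hw hmA, hfeq⟩, ?_⟩
  intro B hB
  obtain ⟨h', hh', hfB⟩ := hB
  have hmB : (genMatrix F (n+1) + B.map C).det - (genMatrix F (n+1)).det - L B ∈ W := by
    rw [hLapp]
    exact harb (GenAux.main_expansion n B)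
  have hdet : (genMatrix F (n+1) + B.map C).det + h'
      = (genMatrix F (n+1) + A₀.map C).det + (w - hdefect) := hfB.symm.trans hfeq
  have hLBA : L B - L A₀ ∈ W := by
    have heq : L B - L A₀ = ((w - hdefect) - h')
        - ((genMatrix F (n+1) + B.map C).det - (genMatrix F (n+1)).det - L B)
        + ((genMatrix F (n+1) + A₀.map C).det - (genMatrix F (n+1)).det - L A₀) := by
      linear_combination hdet
    rw [heq]
    exact Submodule.add_mem W
      (Submodule.sub_mem W (Submodule.sub_mem W (Submodule.sub_mem W hw hmA) hh') hmB) hmA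
  rw [← map_sub] at hLBA
  have hzero : ∀ i j : Fin (n+1), B i j - A₀ i j = 0 := by
    intro i j
    have hc := hWcoeff i j _ hLBA
    have hcomp : coeff (GenAux.diagMono n i j) (L (B - A₀))
        = (-1 : F) ^ ((i : ℕ) + (j : ℕ)) * (B i j - A₀ i j) := by
      rw [hLapp, coeff_sum]
      have hinner : ∀ p : Fin (n+1), coeff (GenAux.diagMono n i j)
          (∑ q, (B - A₀) p q • GenAux.Kdet F n p q)
          = ∑ q, (B - A₀) p q • coeff (GenAux.diagMono n i j) (GenAux.Kdet F n p q) := by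
        intro p
        rw [coeff_sum]
        exact Finset.sum_congr rfl fun q _ => coeff_smul _ _ _
      rw [Finset.sum_congr rfl fun p _ => hinner p]
      rw [Finset.sum_eq_single i]
      · rw [Finset.sum_eq_single j]
        · rw [GenAux.coeff_Kdet_diag, if_pos ⟨rfl, rfl⟩, Matrix.sub_apply, smul_eq_mul]
          ring
        · intro q _ hq
          rw [GenAux.coeff_Kdet_diag, if_neg (fun hcc => hq hcc.2), smul_zero]
        · intro hc'; exact absurd (Finset.mem_univ _) hc'
      · intro p _ hp
        refine Finset.sum_eq_zero fun q _ => ?_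
        rw [GenAux.coeff_Kdet_diag, if_neg (fun hcc => hp hcc.1), smul_zero]
      · intro hc'; exact absurd (Finset.mem_univ _) hc'
    rw [hcomp] at hc
    rcases mul_eq_zero.1 hc with hzz | hzz
    · exact absurd hzz (pow_ne_zero _ (neg_ne_zero.2 one_ne_zero))
    · exact hzz
  ext i j
  exact sub_eq_zero.1 (hzero i j)
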